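/- For every integer K ≥ 2, every T ∈ ℕ, and every sequence (s_t, b_t)_{t=1}^T of points in [0,1]², there exists a pair (p†, q†) ∈ G_K such that Rev(p†,q†,s_t,b_t) ≥ −1/(K − 1) for every t ∈ {1,…,T}, and Σ_{t=1}^T GFT(p†,q†,s_t,b_t) ≥ (sup_{p ∈ [0,1]} Σ_{t=1}^T GFT(p,p,s_t,b_t)) − T/(K − 1). -/

import Mathlib

/-- Gain from trade. -/
noncomputable def GFT (p q s b : ℝ) : ℝ := (b - s) * (if s ≤ p ∧ q ≤ b then 1 else 0)

/-- Revenue. -/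
noncomputable def Rev (p q s b : ℝ) : ℝ := (q - p) * (if s ≤ p ∧ q ≤ b then 1 else 0)

/-- The uniform grid `G_K = {(i/(K-1), j/(K-1)) : i, j ∈ {0,…,K-1}}`. -/
def grid (K : ℕ) : Set (ℝ × ℝ) :=
  {x | ∃ i j : ℕ, i < K ∧ j < K ∧ x.1 = (i : ℝ) / ((K : ℝ) - 1) ∧ x.2 = (j : ℝ) / ((K : ℝ) - 1)}

lemma gft_key (A a p s b : ℝ) (h1 : a ≤ p) (h2 : p ≤ A) :
    GFT p p s b ≤ GFT A a s b + (A - a) := by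
  unfold GFT
  by_cases h : s ≤ p ∧ p ≤ b
  · rw [if_pos h, if_pos ⟨h.1.trans h2, h1.trans h.2⟩]; linarith
  · rw [if_neg h]
    by_cases h' : s ≤ A ∧ a ≤ b
    · rw [if_pos h']; have := h'.1; have := h'.2; nlinarith
    · rw [if_neg h']; simp; linarith

theorem stmt7 (K : ℕ) (hK : 2 ≤ K) (T : ℕ) (s b : Fin T → ℝ)
    (hs : ∀ t, s t ∈ Set.Icc (0:ℝ) 1) (hb : ∀ t, b t ∈ Set.Icc (0:ℝ) 1) :
    ∃ pd qd : ℝ, (pd, qd) ∈ grid K ∧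
      (∀ t, Rev pd qd (s t) (b t) ≥ -(1 / ((K : ℝ) - 1))) ∧
      ∑ t, GFT pd qd (s t) (b t) ≥
        (⨆ p : Set.Icc (0:ℝ) 1, ∑ t, GFT (p : ℝ) (p : ℝ) (s t) (b t)) - T / ((K : ℝ) - 1) := by
  have hK2 : (2:ℝ) ≤ (K:ℝ) := by exact_mod_cast hK
  set c : ℝ := (K : ℝ) - 1 with hc
  have hc1 : (1:ℝ) ≤ c := by simp [hc]; linarith
  have hc0 : (0:ℝ) < c := by linarith
  obtain ⟨i, hi, hmax⟩ := Finset.exists_max_image (Finset.range (K-1))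
    (fun i : ℕ => ∑ t, GFT (((i:ℝ)+1)/c) ((i:ℝ)/c) (s t) (b t))
    ⟨0, Finset.mem_range.2 (by omega)⟩
  have hiK : i < K - 1 := Finset.mem_range.1 hi
  refine ⟨((i:ℝ)+1)/c, (i:ℝ)/c, ⟨i+1, i, by omega, by omega, by push_cast; ring, rfl⟩, ?_, ?_⟩
  · intro t
    unfold Rev
    by_cases h : s t ≤ ((i:ℝ)+1)/c ∧ (i:ℝ)/c ≤ b t
    · rw [if_pos h]
      have : (i:ℝ)/c - ((i:ℝ)+1)/c = -(1/c) := by field_simp; ring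
      rw [mul_one, this]
    · rw [if_neg h, mul_zero]
      have : 0 < 1/c := by positivity
      linarith
  · rw [ge_iff_le, sub_le_iff_le_add]
    apply ciSup_le
    rintro ⟨p, hp0, hp1⟩
    simp only
    -- choose cell j
    set n : ℕ := (⌊p * c⌋).toNat with hn
    set j : ℕ := min n (K - 2) with hj
    have hpc0 : 0 ≤ p * c := mul_nonneg hp0 (le_of_lt hc0)
    have hcastn : ((n:ℝ)) = ((⌊p * c⌋ : ℤ) : ℝ) := by
      exact_mod_cast congrArg (Int.cast : ℤ → ℝ) (Int.toNat_of_nonneg (Int.floor_nonneg.2 hpc0))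
    have hfl : ((n:ℝ)) ≤ p * c := by rw [hcastn]; exact Int.floor_le _
    have hj1 : (j:ℝ) ≤ p * c := le_trans (by exact_mod_cast Nat.cast_le.2 (min_le_left n (K-2)) : (j:ℝ) ≤ (n:ℝ)) hfl
    have hj2 : p * c ≤ (j:ℝ) + 1 := by
      rcases le_or_gt n (K-2) with hle | hlt
      · have : j = n := by omega
        rw [this]
        have := Int.lt_floor_add_one (p * c)
        rw [hcastn]; linarith
      · have : j = K - 2 := by omega
        rw [this]
        have h1 : p * c ≤ c := by nlinarith
        have h2 : ((K-2:ℕ):ℝ) + 1 = c := by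
          rw [hc]; push_cast [Nat.cast_sub hK]; ring
        linarith
    have hjK : j < K - 1 := by omega
    have ha : (j:ℝ)/c ≤ p := by rw [div_le_iff₀ hc0]; linarith
    have hA : p ≤ ((j:ℝ)+1)/c := by rw [le_div_iff₀ hc0]; linarith
    have hstep : ∀ t, GFT p p (s t) (b t) ≤ GFT (((j:ℝ)+1)/c) ((j:ℝ)/c) (s t) (b t) + 1/c := by
      intro t
      have := gft_key (((j:ℝ)+1)/c) ((j:ℝ)/c) p (s t) (b t) ha hA
      have hd : ((j:ℝ)+1)/c - (j:ℝ)/c = 1/c := by field_simp; ring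
      linarith [hd ▸ this]
    calc ∑ t, GFT p p (s t) (b t)
        ≤ ∑ t, (GFT (((j:ℝ)+1)/c) ((j:ℝ)/c) (s t) (b t) + 1/c) :=
          Finset.sum_le_sum (fun t _ => hstep t)
      _ = (∑ t, GFT (((j:ℝ)+1)/c) ((j:ℝ)/c) (s t) (b t)) + T * (1/c) := by
          rw [Finset.sum_add_distrib]; simp
      _ ≤ (∑ t, GFT (((i:ℝ)+1)/c) ((i:ℝ)/c) (s t) (b t)) + (T:ℝ)/c := by
          have := hmax j (Finset.mem_range.2 hjK)
          have : (T:ℝ) * (1/c) = (T:ℝ)/c := by ring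
          linarith [hmax j (Finset.mem_range.2 hjK)]
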